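/- For real b > 0 and μ > 0, the series ∑_{n=0}^∞ ((1/2)_n / n!) · 1/(b + nμ) equals π^{1/2} Γ(b/μ) / (μ Γ(b/μ + 1/2)). -/

import Mathlib

open Real BigOperators

noncomputable def poch (a : ℝ) (n : ℕ) : ℝ := ∏ i ∈ Finset.range n, (a + i)

noncomputable def digamma (x : ℝ) : ℝ := deriv Real.Gamma x / Real.Gamma x

/-- the coefficient sequence -/
noncomputable def aa (n : ℕ) : ℝ := poch (1/2) n / n.factorial

lemma poch_succ (n : ℕ) : poch (1/2) (n+1) = poch (1/2) n * (1/2 + n) := by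
  simp [poch, Finset.prod_range_succ]

lemma poch_pos (n : ℕ) : 0 < poch (1/2) n := by
  apply Finset.prod_pos
  intro i _
  positivity

lemma aa_zero : aa 0 = 1 := by simp [aa, poch]

lemma aa_pos (n : ℕ) : 0 < aa n := by
  have := poch_pos n
  have : (0:ℝ) < n.factorial := by positivity
  exact div_pos (poch_pos n) this

lemma aa_succ (n : ℕ) : aa (n+1) = aa n * ((1/2 + n) / (n+1)) := by
  have h1 : ((n+1).factorial : ℝ) = (n.factorial : ℝ) * (n+1) := by
    rw [Nat.factorial_succ]; push_cast; ring
  have h2 : (n.factorial : ℝ) ≠ 0 := by positivity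
  rw [aa, aa, poch_succ, h1, div_mul_div_comm]

lemma aa_sq_le (n : ℕ) : aa n ^ 2 * (n+1) ≤ 1 := by
  induction n with
  | zero => simp [aa_zero]
  | succ n ih =>
    rw [aa_succ]
    have hn1 : (0:ℝ) < n + 1 := by positivity
    have key : (1/2 + (n:ℝ))^2 * ((n:ℝ)+1+1) ≤ ((n:ℝ)+1)^2 * ((n:ℝ)+1) := by nlinarith [sq_nonneg ((n:ℝ))]
    have ha := aa_pos n
    have expand : (aa n * ((1/2 + n) / (n+1)))^2 * ((n:ℝ)+1+1)
        = aa n ^2 * ((n:ℝ)+1) * ((1/2 + (n:ℝ))^2 * ((n:ℝ)+1+1) / (((n:ℝ)+1)^2 * ((n:ℝ)+1))) := by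
      field_simp
    push_cast
    push_cast at ih
    rw [expand]
    have h3 : (1/2 + (n:ℝ))^2 * ((n:ℝ)+1+1) / (((n:ℝ)+1)^2 * ((n:ℝ)+1)) ≤ 1 := by
      rw [div_le_one (by positivity)]
      exact key
    calc aa n ^2 * ((n:ℝ)+1) * ((1/2 + (n:ℝ))^2 * ((n:ℝ)+1+1) / (((n:ℝ)+1)^2 * ((n:ℝ)+1)))
        ≤ 1 * 1 := by
          apply mul_le_mul ih h3 (by positivity) zero_le_one
      _ = 1 := by ring

lemma aa_le_one (n : ℕ) : aa n ≤ 1 := by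
  have h := aa_sq_le n
  nlinarith [aa_pos n, sq_nonneg (aa n - 1), Nat.cast_nonneg (α := ℝ) n]

lemma aa_le_inv_sqrt (n : ℕ) : aa n ≤ ((n:ℝ)+1) ^ (-(1/2) : ℝ) := by
  have h := aa_sq_le n
  have hn : (0:ℝ) < (n:ℝ)+1 := by positivity
  have h2 : aa n ^ 2 ≤ (((n:ℝ)+1) ^ (-(1/2):ℝ))^2 := by
    rw [← Real.rpow_natCast (((n:ℝ)+1) ^ (-(1/2):ℝ)) 2, ← Real.rpow_mul hn.le]
    norm_num
    rw [Real.rpow_neg_one, ← one_div]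
    exact (le_div_iff₀ hn).mpr h
  calc aa n = Real.sqrt (aa n ^2) := (Real.sqrt_sq (aa_pos n).le).symm
    _ ≤ Real.sqrt ((((n:ℝ)+1) ^ (-(1/2):ℝ))^2) := Real.sqrt_le_sqrt h2
    _ = ((n:ℝ)+1) ^ (-(1/2):ℝ) := Real.sqrt_sq (by positivity)

lemma aux_summable {r : ℝ} (h0 : 0 ≤ r) (h1 : r < 1) :
    Summable (fun n : ℕ => (n:ℝ) * r ^ (n-1)) := by
  rw [← summable_nat_add_iff 1]
  simp only [Nat.add_sub_cancel]
  have h2 : Summable (fun n : ℕ => (n:ℝ)^1 * r ^ n + r ^ n) :=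
    (summable_pow_mul_geometric_of_norm_lt_one 1
      (by rwa [Real.norm_eq_abs, abs_of_nonneg h0])).add (summable_geometric_of_lt_one h0 h1)
  exact h2.congr (fun n => by push_cast; ring)

/-- partial sums function -/
noncomputable def UU (x : ℝ) : ℝ := ∑' n, aa n * x ^ n

lemma summable_aa_pow {x : ℝ} (hx : |x| < 1) : Summable (fun n => aa n * x ^ n) := by
  apply Summable.of_norm_bounded (summable_geometric_of_lt_one (abs_nonneg x) hx)
  intro n
  rw [norm_mul, norm_pow, Real.norm_eq_abs, Real.norm_eq_abs, abs_of_pos (aa_pos n)]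
  calc aa n * |x| ^ n ≤ 1 * |x| ^ n := by
        apply mul_le_mul_of_nonneg_right (aa_le_one n) (by positivity)
    _ = |x| ^ n := one_mul _

lemma summable_aa_mul_pow {x : ℝ} (hx : |x| < 1) :
    Summable (fun n => aa n * ((n:ℝ) * x ^ (n-1))) := by
  have hgeo : Summable (fun n : ℕ => (n:ℝ) * |x| ^ (n-1)) := aux_summable (abs_nonneg x) hx
  apply Summable.of_norm_bounded hgeo
  intro n
  rw [Real.norm_eq_abs, abs_mul, abs_mul, abs_of_pos (aa_pos n), Nat.abs_cast, abs_pow]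
  calc aa n * ((n:ℝ) * |x| ^ (n-1)) ≤ 1 * ((n:ℝ) * |x| ^ (n-1)) := by
        apply mul_le_mul_of_nonneg_right (aa_le_one n) (by positivity)
    _ = _ := one_mul _

lemma hasDerivAt_UU {x : ℝ} (hx : |x| < 1) :
    HasDerivAt UU (∑' n, aa n * ((n:ℝ) * x ^ (n-1))) x := by
  set r : ℝ := (|x| + 1) / 2 with hr
  have hax := abs_nonneg x
  have hr0 : 0 ≤ r := by positivity
  have hxr : |x| < r := by rw [hr]; linarith
  have hr1 : r < 1 := by rw [hr]; linarith
  have hu : Summable (fun n : ℕ => (n:ℝ) * r ^ (n-1)) := aux_summable hr0 hr1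
  refine hasDerivAt_tsum_of_isPreconnected hu (isOpen_Ioo (a := -r) (b := r))
      ((convex_Ioo _ _).isPreconnected)
      (fun n y _ => ((hasDerivAt_pow n y).const_mul (aa n)))
      (fun n y hy => ?_) (y₀ := 0) ?_ ?_ ?_
  · have hyr : |y| ≤ r := by
      rw [abs_le]
      exact ⟨(Set.mem_Ioo.1 hy).1.le, (Set.mem_Ioo.1 hy).2.le⟩
    rw [Real.norm_eq_abs, abs_mul, abs_mul, abs_of_pos (aa_pos n), Nat.abs_cast, abs_pow]
    calc aa n * ((n:ℝ) * |y| ^ (n-1)) ≤ 1 * ((n:ℝ) * r ^ (n-1)) := by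
          apply mul_le_mul (aa_le_one n) ?_ (by positivity) zero_le_one
          exact mul_le_mul_of_nonneg_left (pow_le_pow_left₀ (abs_nonneg y) hyr _) (Nat.cast_nonneg n)
      _ = _ := one_mul _
  · exact Set.mem_Ioo.2 ⟨by linarith, by linarith⟩
  · exact summable_aa_pow (by simp)
  · exact Set.mem_Ioo.2 ⟨neg_lt_of_abs_lt hxr, lt_of_abs_lt hxr⟩

lemma summable_aa_n_pow {x : ℝ} (hx : |x| < 1) :
    Summable (fun n => aa n * ((n:ℝ) * x ^ n)) := by
  have hb : Summable (fun n : ℕ => (n:ℝ)^1 * |x| ^ n) :=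
    summable_pow_mul_geometric_of_norm_lt_one 1 (by rwa [Real.norm_eq_abs, abs_abs])
  apply Summable.of_norm_bounded hb
  intro n
  rw [Real.norm_eq_abs, abs_mul, abs_mul, abs_of_pos (aa_pos n), Nat.abs_cast, abs_pow, pow_one]
  calc aa n * ((n:ℝ) * |x| ^ n) ≤ 1 * ((n:ℝ) * |x| ^ n) := by
        apply mul_le_mul_of_nonneg_right (aa_le_one n) (by positivity)
    _ = _ := one_mul _

lemma DD_eq {x : ℝ} (hx : |x| < 1) :
    (1 - x) * (∑' n, aa n * ((n:ℝ) * x ^ (n-1))) = (1/2) * UU x := by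
  have hS2 : Summable (fun n => aa n * x ^ n) := summable_aa_pow hx
  have hSD : Summable (fun n => aa n * ((n:ℝ) * x ^ (n-1))) := summable_aa_mul_pow hx
  have hS3 : Summable (fun n => aa n * ((n:ℝ) * x ^ n)) := summable_aa_n_pow hx
  set D := ∑' n, aa n * ((n:ℝ) * x ^ (n-1)) with hD
  have hxD : x * D = ∑' n, aa n * ((n:ℝ) * x ^ n) := by
    rw [hD, ← tsum_mul_left]
    apply tsum_congr
    intro n
    cases n with
    | zero => simp
    | succ k => simp only [Nat.add_sub_cancel, pow_succ]; push_cast; ring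
  have hshift : D = ∑' n, aa n * ((1/2 + (n:ℝ)) * x ^ n) := by
    rw [hD, Summable.tsum_eq_zero_add hSD]
    simp only [Nat.cast_zero, zero_mul, mul_zero, zero_add, Nat.add_sub_cancel]
    apply tsum_congr
    intro n
    have hn1 : ((n:ℝ) + 1) ≠ 0 := by positivity
    rw [aa_succ]
    push_cast
    field_simp
  have hsplit : (fun n => aa n * ((1/2 + (n:ℝ)) * x ^ n))
      = fun n => (1/2) * (aa n * x ^ n) + aa n * ((n:ℝ) * x ^ n) := funext fun n => by ring
  have hDval : D = (1/2) * UU x + ∑' n, aa n * ((n:ℝ) * x ^ n) := by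
    rw [hshift, hsplit, Summable.tsum_add (hS2.mul_left _) hS3, tsum_mul_left]
    rfl
  have : (1 - x) * D = D - x * D := by ring
  rw [this, hxD, hDval]
  ring

lemma UU_zero : UU 0 = 1 := by
  rw [UU, tsum_eq_single 0 (fun n hn => by simp [zero_pow hn])]
  simp [aa_zero]

lemma UU_sq {x : ℝ} (hx : |x| < 1) : (1 - x) * UU x ^ 2 = 1 := by
  have hdiff : ∀ y ∈ Set.Ioo (-1:ℝ) 1, HasDerivAt (fun z => (1-z) * UU z ^ 2) 0 y := by
    intro y hy
    have hy1 : |y| < 1 := abs_lt.2 ⟨hy.1, hy.2⟩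
    have hU := hasDerivAt_UU hy1
    have h1 : HasDerivAt (fun z : ℝ => (1:ℝ) - z) (-1) y := (hasDerivAt_id y).const_sub 1
    have h2 : HasDerivAt (fun z => UU z ^ 2)
        ((2:ℕ) * UU y ^ (2-1) * (∑' n, aa n * ((n:ℝ) * y ^ (n-1)))) y := hU.pow 2
    have h3 := h1.mul h2
    refine h3.congr_deriv ?_
    have h4 := DD_eq hy1
    simp only [pow_one, Nat.cast_ofNat]
    linear_combination (2 * UU y) * h4
  have hkey : ∀ y ∈ Set.Ioo (-1:ℝ) 1, (1 - y) * UU y ^ 2 = (1 - (0:ℝ)) * UU 0 ^ 2 := by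
    intro y hy
    apply (convex_Ioo (-1:ℝ) 1).is_const_of_fderivWithin_eq_zero (𝕜 := ℝ)
        (f := fun z => (1-z) * UU z ^ 2) ?_ ?_ hy (by norm_num)
    · intro z hz
      exact ((hdiff z hz).differentiableAt).differentiableWithinAt
    · intro z hz
      rw [fderivWithin_of_isOpen isOpen_Ioo hz, (hdiff z hz).hasFDerivAt.fderiv]
      ext w
      simp
  have := hkey x (abs_lt.1 hx |> fun h => Set.mem_Ioo.2 ⟨h.1, h.2⟩)
  rw [this, UU_zero]
  norm_num

lemma hasSum_binom {x : ℝ} (hx0 : 0 ≤ x) (hx1 : x < 1) :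
    HasSum (fun n => aa n * x ^ n) ((1-x) ^ (-(1/2):ℝ)) := by
  have hx : |x| < 1 := by rwa [abs_of_nonneg hx0]
  have hs := summable_aa_pow hx
  have hU1 : 1 ≤ UU x := by
    have h := Summable.le_tsum hs 0 (fun n _ => mul_nonneg (aa_pos n).le (pow_nonneg hx0 n))
    simpa [aa_zero, UU] using h
  have hsq := UU_sq hx
  have h1x : 0 < 1 - x := by linarith
  have hB : ((1-x) ^ (-(1/2):ℝ))^2 = (1-x)⁻¹ := by
    rw [← Real.rpow_natCast ((1-x) ^ (-(1/2):ℝ)) 2, ← Real.rpow_mul h1x.le]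
    norm_num
    exact Real.rpow_neg_one _
  have hU2 : UU x ^ 2 = (1-x)⁻¹ := by
    field_simp
    nlinarith [hsq]
  have hBpos : 0 < (1-x) ^ (-(1/2):ℝ) := Real.rpow_pos_of_pos h1x _
  have hUB : UU x = (1-x) ^ (-(1/2):ℝ) := by
    calc UU x = Real.sqrt (UU x ^ 2) := (Real.sqrt_sq (by linarith)).symm
      _ = Real.sqrt (((1-x) ^ (-(1/2):ℝ))^2) := by rw [hU2, hB]
      _ = _ := Real.sqrt_sq hBpos.le
  rw [← hUB]
  exact hs.hasSum

lemma real_beta {c : ℝ} (hc : 0 < c) :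
    ∫ x in (0:ℝ)..1, x ^ (c-1) * (1-x) ^ (-(1/2):ℝ) =
      Real.sqrt π * Real.Gamma c / Real.Gamma (c + 1/2) := by
  have key := Complex.Gamma_mul_Gamma_eq_betaIntegral (s := (c:ℂ)) (t := (1/2 : ℂ))
    (by simpa using hc) (by norm_num)
  have hbeta : Complex.betaIntegral (c:ℂ) (1/2 : ℂ)
      = ((∫ x in (0:ℝ)..1, x ^ (c-1) * (1-x) ^ (-(1/2):ℝ) : ℝ) : ℂ) := by
    rw [Complex.betaIntegral, ← intervalIntegral.integral_ofReal]
    apply intervalIntegral.integral_congr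
    intro x hx
    rw [Set.uIcc_of_le (by norm_num : (0:ℝ) ≤ 1)] at hx
    have hx0 : 0 ≤ x := hx.1
    have hx1 : 0 ≤ 1 - x := by linarith [hx.2]
    simp only [Complex.ofReal_mul]
    rw [Complex.ofReal_cpow hx0, Complex.ofReal_cpow hx1]
    push_cast
    norm_num
  rw [hbeta] at key
  have h2 : Complex.Gamma (c:ℂ) = (Real.Gamma c : ℂ) := Complex.Gamma_ofReal c
  have h3 : Complex.Gamma (1/2 : ℂ) = (Real.Gamma (1/2) : ℂ) := by
    rw [← Complex.Gamma_ofReal]; norm_num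
  have h4 : Complex.Gamma ((c:ℂ) + 1/2) = (Real.Gamma (c + 1/2) : ℂ) := by
    rw [← Complex.Gamma_ofReal]; push_cast; norm_num
  rw [h2, h3, h4, ← Complex.ofReal_mul, ← Complex.ofReal_mul] at key
  have key2 := Complex.ofReal_injective key
  have hpos : 0 < Real.Gamma (c + 1/2) := Real.Gamma_pos_of_pos (by linarith)
  rw [Real.Gamma_one_half_eq] at key2
  rw [eq_div_iff hpos.ne']
  linear_combination -key2

open MeasureTheory in
lemma integrable_term {c : ℝ} (hc : 0 < c) (n : ℕ) :
    IntegrableOn (fun x : ℝ => aa n * x ^ ((n:ℝ)+c-1)) (Set.Ioo 0 1) := by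
  have h : IntervalIntegrable (fun x : ℝ => x ^ ((n:ℝ)+c-1)) volume 0 1 :=
    intervalIntegral.intervalIntegrable_rpow'
    (by have : (0:ℝ) ≤ n := Nat.cast_nonneg n; linarith)
  have h2 := h.const_mul (aa n)
  rw [intervalIntegrable_iff_integrableOn_Ioc_of_le zero_le_one] at h2
  exact h2.mono_set Set.Ioo_subset_Ioc_self

open MeasureTheory in
lemma integral_term {c : ℝ} (hc : 0 < c) (n : ℕ) :
    ∫ x in Set.Ioo (0:ℝ) 1, aa n * x ^ ((n:ℝ)+c-1) = aa n * (1/((n:ℝ)+c)) := by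
  have hnc : (0:ℝ) < (n:ℝ) + c := by positivity
  rw [← integral_Ioc_eq_integral_Ioo, ← intervalIntegral.integral_of_le zero_le_one,
    intervalIntegral.integral_const_mul, integral_rpow (Or.inl (by linarith : (-1:ℝ) < (n:ℝ)+c-1))]
  rw [Real.one_rpow, Real.zero_rpow (by linarith : (n:ℝ)+c-1+1 ≠ 0)]
  congr 1
  field_simp
  rw [sub_add_cancel, sub_zero, one_mul, div_self hnc.ne']

lemma summable_target {c : ℝ} (hc : 0 < c) :
    Summable (fun n : ℕ => aa n * (1/((n:ℝ)+c))) := by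
  set K : ℝ := max 1 c⁻¹ with hK
  have hK1 : (1:ℝ) ≤ K := le_max_left _ _
  have hKc : c⁻¹ ≤ K := le_max_right _ _
  have h0 : Summable (fun n : ℕ => (n:ℝ) ^ (-(3/2):ℝ)) :=
    Real.summable_nat_rpow.2 (by norm_num)
  have h1 : Summable (fun n : ℕ => ((n:ℝ)+1) ^ (-(3/2):ℝ)) := by
    have := (summable_nat_add_iff 1).2 h0
    exact this.congr (fun n => by push_cast; norm_num)
  apply Summable.of_nonneg_of_le (fun n => ?_) (fun n => ?_) (h1.mul_left K)
  · have := aa_pos n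
    positivity
  · have hn1 : (0:ℝ) < (n:ℝ)+1 := by positivity
    have hnc : (0:ℝ) < (n:ℝ)+c := by positivity
    have hinv1 : 1 ≤ c⁻¹ ∨ 1 ≤ c := by
      rcases le_total 1 c with h|h
      · exact Or.inr h
      · refine Or.inl ?_
        nlinarith [inv_mul_cancel₀ hc.ne', inv_pos.2 hc]
    have key : (n:ℝ)+1 ≤ K*((n:ℝ)+c) := by
      rcases le_total 1 c with h|h
      · calc (n:ℝ)+1 ≤ 1*((n:ℝ)+c) := by linarith
          _ ≤ K*((n:ℝ)+c) := mul_le_mul_of_nonneg_right hK1 hnc.le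
      · have h1c : 1 ≤ c⁻¹ := by nlinarith [inv_mul_cancel₀ hc.ne', inv_pos.2 hc]
        have h2 : (n:ℝ)+1 ≤ c⁻¹*((n:ℝ)+c) := by
          rw [mul_add, inv_mul_cancel₀ hc.ne']
          have h3 : (n:ℝ) ≤ c⁻¹*(n:ℝ) := le_mul_of_one_le_left (Nat.cast_nonneg n) h1c
          linarith
        exact h2.trans (mul_le_mul_of_nonneg_right hKc hnc.le)
    have hfrac : 1/((n:ℝ)+c) ≤ K * (1/((n:ℝ)+1)) := by
      rw [mul_one_div, div_le_div_iff₀ hnc hn1]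
      linarith [key]
    calc aa n * (1/((n:ℝ)+c)) ≤ ((n:ℝ)+1)^(-(1/2):ℝ) * (K*(1/((n:ℝ)+1))) := by
          apply mul_le_mul (aa_le_inv_sqrt n) hfrac (by positivity) (by positivity)
      _ = K * ((n:ℝ)+1) ^ (-(3/2):ℝ) := by
          have e1 : ((n:ℝ)+1)^(-(3/2):ℝ) = ((n:ℝ)+1)^(-(1/2):ℝ) * ((n:ℝ)+1)⁻¹ := by
            rw [← Real.rpow_neg_one ((n:ℝ)+1), ← Real.rpow_add hn1]
            norm_num
          rw [e1, one_div]
          ring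

open MeasureTheory in
lemma interchange {c : ℝ} (hc : 0 < c) :
    ∑' n : ℕ, aa n * (1/((n:ℝ)+c)) =
      Real.sqrt π * Real.Gamma c / Real.Gamma (c + 1/2) := by
  set f : ℕ → ℝ → ℝ := fun n x => aa n * x ^ ((n:ℝ)+c-1) with hf
  set μ := volume.restrict (Set.Ioo (0:ℝ) 1) with hμ
  have hint : ∀ n, IntegrableOn (f n) (Set.Ioo 0 1) := integrable_term hc
  have hmeas : ∀ n, AEStronglyMeasurable (f n) μ := fun n => (hint n).aestronglyMeasurable
  have hval : ∀ n, ∫ x in Set.Ioo (0:ℝ) 1, f n x = aa n * (1/((n:ℝ)+c)) := integral_term hc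
  have hnonneg : ∀ n, ∀ x ∈ Set.Ioo (0:ℝ) 1, 0 ≤ f n x := by
    intro n x hx
    have := aa_pos n
    have := Real.rpow_nonneg hx.1.le ((n:ℝ)+c-1)
    positivity
  have hnorm : ∀ n, ∫⁻ x, ‖f n x‖₊ ∂μ = ENNReal.ofReal (aa n * (1/((n:ℝ)+c))) := by
    intro n
    change ∫⁻ x, ‖f n x‖ₑ ∂μ = _
    rw [← ofReal_integral_norm_eq_lintegral_enorm (hint n)]
    congr 1
    rw [← hval n]
    apply setIntegral_congr_fun measurableSet_Ioo
    intro x hx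
    exact Real.norm_of_nonneg (hnonneg n x hx)
  have hsum := summable_target hc
  have hne : ∑' n, ∫⁻ x, ‖f n x‖₊ ∂μ ≠ ⊤ := by
    rw [tsum_congr hnorm, ← ENNReal.ofReal_tsum_of_nonneg
      (fun n => mul_nonneg (aa_pos n).le (by positivity)) hsum]
    exact ENNReal.ofReal_ne_top
  have swap := MeasureTheory.integral_tsum hmeas hne
  have hpt : ∀ x ∈ Set.Ioo (0:ℝ) 1, ∑' n, f n x = x ^ (c-1) * (1-x) ^ (-(1/2):ℝ) := by
    intro x hx
    have hx0 : (0:ℝ) < x := hx.1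
    have hx1 : x < 1 := hx.2
    have hterm : ∀ n : ℕ, f n x = (aa n * x ^ n) * x ^ (c-1) := by
      intro n
      rw [hf]
      simp only
      rw [show (n:ℝ)+c-1 = (n:ℝ)+(c-1) by ring, Real.rpow_add hx0, Real.rpow_natCast]
      ring
    rw [tsum_congr hterm, tsum_mul_right, (hasSum_binom hx0.le hx1).tsum_eq]
    ring
  calc ∑' n : ℕ, aa n * (1/((n:ℝ)+c)) = ∑' n, ∫ x in Set.Ioo (0:ℝ) 1, f n x :=
        (tsum_congr hval).symm
    _ = ∫ x in Set.Ioo (0:ℝ) 1, ∑' n, f n x := swap.symm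
    _ = ∫ x in Set.Ioo (0:ℝ) 1, x ^ (c-1) * (1-x) ^ (-(1/2):ℝ) :=
        setIntegral_congr_fun measurableSet_Ioo hpt
    _ = ∫ x in (0:ℝ)..1, x ^ (c-1) * (1-x) ^ (-(1/2):ℝ) := by
        rw [intervalIntegral.integral_of_le zero_le_one, integral_Ioc_eq_integral_Ioo]
    _ = Real.sqrt π * Real.Gamma c / Real.Gamma (c + 1/2) := real_beta hc

theorem stmt3 (b μ : ℝ) (hb : 0 < b) (hμ : 0 < μ) :
    ∑' n : ℕ, (poch (1/2) n / n.factorial) * (1 / (b + n * μ)) =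
      Real.sqrt π * Real.Gamma (b / μ) / (μ * Real.Gamma (b / μ + 1/2)) := by
  have hc : 0 < b / μ := div_pos hb hμ
  have hterm : ∀ n : ℕ, (poch (1/2) n / n.factorial) * (1 / (b + n * μ))
      = (1/μ) * (aa n * (1/((n:ℝ) + b/μ))) := by
    intro n
    have hbn : b + (n:ℝ) * μ = μ * ((n:ℝ) + b/μ) := by
      field_simp
      ring
    rw [aa, hbn]
    have h1 : (0:ℝ) < (n:ℝ) + b/μ := by positivity
    field_simp
  rw [tsum_congr hterm, tsum_mul_left, interchange hc]
  have hg : 0 < Real.Gamma (b/μ + 1/2) := Real.Gamma_pos_of_pos (by linarith)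
  field_simp
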